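/- arXiv:1609.09043 — 3 statements merged into one kernel-verified Lean document; each statement's English description precedes it below -/
import Mathlib

section
/- Let A(1), A(2) ∈ ℝ^{n×n} have disjoint spectra (no common eigenvalues over ℂ), and let c_1, c_2 ∈ ℝ^{1×n}. If vectors x_1, x_2 ∈ ℝ^n satisfy c_1 A(1)^k x_1 = c_2 A(2)^k x_2 for all k = 0, 1, …, 2n−1, then c_1 A(1)^k x_1 = 0 for all 0 ≤ k ≤ 2n−1. -/
open Matrix Polynomial

/-- The scalar output functional `f ↦ c ⬝ᵥ (f(A)) x` as a linear map on polynomials. -/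
noncomputable def outMap {n : ℕ} (A : Matrix (Fin n) (Fin n) ℝ) (c x : Fin n → ℝ) :
    ℝ[X] →ₗ[ℝ] ℝ where
  toFun f := c ⬝ᵥ (Polynomial.aeval A f).mulVec x
  map_add' f g := by simp [map_add, Matrix.add_mulVec, dotProduct_add]
  map_smul' a f := by
    simp [_root_.map_smul, Matrix.smul_mulVec, dotProduct_smul, smul_eq_mul]

lemma outMap_pow {n : ℕ} (A : Matrix (Fin n) (Fin n) ℝ) (c x : Fin n → ℝ) (k : ℕ) :
    outMap A c x (X ^ k) = c ⬝ᵥ (A ^ k).mulVec x := by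
  simp [outMap, aeval_X_pow]

lemma outMap_mul_charpoly {n : ℕ} (A : Matrix (Fin n) (Fin n) ℝ) (c x : Fin n → ℝ)
    (f : ℝ[X]) : outMap A c x (f * A.charpoly) = 0 := by
  simp [outMap, _root_.map_mul, Matrix.aeval_self_charpoly]

/-- Two linear functionals on polynomials agreeing on monomials of degree `< k` agree on
polynomials of `natDegree < k`. -/
lemma outMap_agree (P Q : ℝ[X] →ₗ[ℝ] ℝ) (k : ℕ) (hk : ∀ j < k, P (X ^ j) = Q (X ^ j))
    (f : ℝ[X]) (hf : f.natDegree < k) : P f = Q f := by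
  conv_lhs => rw [f.as_sum_range' k hf]
  conv_rhs => rw [f.as_sum_range' k hf]
  rw [map_sum, map_sum]
  refine Finset.sum_congr rfl fun i hi => ?_
  rw [← smul_X_eq_monomial, _root_.map_smul, _root_.map_smul, hk i (Finset.mem_range.1 hi)]

/-- A complex root of the characteristic polynomial lies in the spectrum. -/
lemma mem_spectrum_of_root {n : ℕ} (M : Matrix (Fin n) (Fin n) ℂ) (μ : ℂ)
    (h : M.charpoly.IsRoot μ) : μ ∈ spectrum ℂ M := by
  have key : M.charpoly.eval μ = (Matrix.scalar (Fin n) μ - M).det := by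
    rw [Matrix.charpoly, _root_.eval_det, matPolyEquiv_charmatrix]
    simp
  have hdet : (Matrix.scalar (Fin n) μ - M).det = 0 := by rw [← key]; exact h
  rw [spectrum.mem_iff]
  intro hu
  rw [Matrix.isUnit_iff_isUnit_det] at hu
  have : (algebraMap ℂ (Matrix (Fin n) (Fin n) ℂ)) μ - M = Matrix.scalar (Fin n) μ - M := rfl
  rw [this, hdet] at hu
  exact hu.ne_zero rfl

lemma coprime_charpolys {n : ℕ} (A₁ A₂ : Matrix (Fin n) (Fin n) ℝ)
    (hspec : spectrum ℂ (A₁.map (algebraMap ℝ ℂ)) ∩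
              spectrum ℂ (A₂.map (algebraMap ℝ ℂ)) = ∅) :
    IsCoprime A₁.charpoly A₂.charpoly := by
  rw [← Polynomial.isCoprime_map (algebraMap ℝ ℂ), ← Matrix.charpoly_map,
    ← Matrix.charpoly_map]
  apply isCoprime_of_dvd
  · intro ⟨h1, _⟩
    exact ((A₁.map (algebraMap ℝ ℂ)).charpoly_monic).ne_zero h1
  · intro z hz hz0 hzp hzq
    have hdeg : z.degree ≠ 0 := fun hd =>
      hz (Polynomial.isUnit_iff_degree_eq_zero.2 hd)
    obtain ⟨μ, hμ⟩ := IsAlgClosed.exists_root z hdeg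
    have h1 : μ ∈ spectrum ℂ (A₁.map (algebraMap ℝ ℂ)) :=
      mem_spectrum_of_root _ _ (hμ.dvd hzp)
    have h2 : μ ∈ spectrum ℂ (A₂.map (algebraMap ℝ ℂ)) :=
      mem_spectrum_of_root _ _ (hμ.dvd hzq)
    exact Set.eq_empty_iff_forall_notMem.mp hspec μ ⟨h1, h2⟩

/-- If `A 1, A 2 ∈ ℝ^{n×n}` have no common eigenvalue over `ℂ`
and the scalar output sequences `c₁ A(1)^k x₁` and `c₂ A(2)^k x₂` agree for
`k = 0, …, 2n−1`, then both are zero on that range. -/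
theorem stmt_6 (n : ℕ) (A₁ A₂ : Matrix (Fin n) (Fin n) ℝ)
    (hspec : spectrum ℂ (A₁.map (algebraMap ℝ ℂ)) ∩
              spectrum ℂ (A₂.map (algebraMap ℝ ℂ)) = ∅)
    (c₁ c₂ : Fin n → ℝ) (x₁ x₂ : Fin n → ℝ)
    (h : ∀ k < 2 * n, c₁ ⬝ᵥ (A₁ ^ k).mulVec x₁ = c₂ ⬝ᵥ (A₂ ^ k).mulVec x₂) :
    ∀ k < 2 * n, c₁ ⬝ᵥ (A₁ ^ k).mulVec x₁ = 0 := by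
  rcases Nat.eq_zero_or_pos n with rfl | hn
  · intro k hk; omega
  set p := A₁.charpoly with hp
  set q := A₂.charpoly with hq
  obtain ⟨u, v, huv⟩ := coprime_charpolys A₁ A₂ hspec
  set P := outMap A₁ c₁ x₁ with hP
  set Q := outMap A₂ c₂ x₂ with hQ
  have hpm : p.Monic := A₁.charpoly_monic
  have hqm : q.Monic := A₂.charpoly_monic
  have hpd : p.natDegree = n := by
    rw [hp, Matrix.charpoly_natDegree_eq_dim, Fintype.card_fin]
  have hqd : q.natDegree = n := by
    rw [hq, Matrix.charpoly_natDegree_eq_dim, Fintype.card_fin]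
  -- key: P and Q agree on all monomials
  have main : ∀ k, P (X ^ k) = Q (X ^ k) := by
    intro k
    induction k using Nat.strong_induction_on with
    | _ k ih =>
      by_cases hk : k < 2 * n
      · rw [hP, hQ, outMap_pow, outMap_pow]; exact h k hk
      · push_neg at hk
        set g : ℝ[X] := X ^ (k - 2 * n) * (p * q) with hg
        have hgm : g.Monic := (monic_X_pow _).mul (hpm.mul hqm)
        have hgd : g.natDegree = k := by
          rw [hg, (monic_X_pow _).natDegree_mul (hpm.mul hqm),
            hpm.natDegree_mul hqm, hpd, hqd, natDegree_X_pow]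
          omega
        set f : ℝ[X] := X ^ k - g with hf
        have hfd : f.natDegree < k := by
          by_cases hf0 : f = 0
          · rw [hf0, natDegree_zero]; omega
          have hdeg : f.degree < (k : ℕ) := by
            have hXk : ((X : ℝ[X]) ^ k).degree = g.degree := by
              rw [degree_X_pow, Polynomial.degree_eq_natDegree hgm.ne_zero, hgd]
            have := Polynomial.degree_sub_lt hXk (pow_ne_zero k X_ne_zero)
              (by rw [leadingCoeff_X_pow, hgm.leadingCoeff])
            rwa [degree_X_pow] at this
          exact (Polynomial.natDegree_lt_iff_degree_lt hf0).2 hdeg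
        have hsplit : (X : ℝ[X]) ^ k = f + g := by rw [hf]; ring
        have hPg : P g = 0 := by
          rw [hg, hP, show X ^ (k - 2 * n) * (p * q) = (X ^ (k - 2 * n) * q) * p by ring]
          exact outMap_mul_charpoly A₁ c₁ x₁ _
        have hQg : Q g = 0 := by
          rw [hg, hQ, show X ^ (k - 2 * n) * (p * q) = (X ^ (k - 2 * n) * p) * q by ring]
          exact outMap_mul_charpoly A₂ c₂ x₂ _
        rw [hsplit, map_add, map_add, hPg, hQg]
        congr 1
        exact outMap_agree P Q k (fun j hj => ih j hj) f hfd
  have hPQ : ∀ f : ℝ[X], P f = Q f := fun f =>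
    outMap_agree P Q (f.natDegree + 1) (fun j _ => main j) f (Nat.lt_succ_self _)
  intro k hk
  have e1 : c₁ ⬝ᵥ (A₁ ^ k).mulVec x₁ = P (X ^ k) := (outMap_pow A₁ c₁ x₁ k).symm
  rw [e1, show (X : ℝ[X]) ^ k = (X ^ k * u) * p + (X ^ k * v) * q by
      rw [show (X ^ k * u) * p + (X ^ k * v) * q = X ^ k * (u * p + v * q) by ring, huv,
        mul_one],
    map_add, hP, outMap_mul_charpoly, zero_add, ← hP, hPQ, hQ, outMap_mul_charpoly]
end

section
/- Let A ∈ ℝ^{n×n}, C ∈ ℝ^{m×n}, and q ≥ 0. The following are equivalent: (i) for every pair of disjoint sensor sets K_1, K_2 ⊆ {1,…,m} with |K_1| ≤ q and |K_2| ≤ q, and every λ ∈ ℂ, x ∈ ℂ^n nonzero, d_1, d_2, one cannot have A x = λ x and C x + D(K_1)d_1 + D(K_2)d_2 = 0; (ii) for every set S ⊆ {1,…,m} with |S| ≤ 2q, the pair (A, C^{S^c}) is observable, where C^{S^c} is C with the rows in S removed. -/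
open Matrix

private lemma re_mulVec {m n : ℕ} (M : Matrix (Fin m) (Fin n) ℝ) (x : Fin n → ℂ) (i : Fin m) :
    (M.mulVec (fun j => (x j).re)) i = ((M.map (algebraMap ℝ ℂ)).mulVec x i).re := by
  simp [Matrix.mulVec, dotProduct, Complex.re_sum, Complex.mul_re]

private lemma im_mulVec {m n : ℕ} (M : Matrix (Fin m) (Fin n) ℝ) (x : Fin n → ℂ) (i : Fin m) :
    (M.mulVec (fun j => (x j).im)) i = ((M.map (algebraMap ℝ ℂ)).mulVec x i).im := by
  simp [Matrix.mulVec, dotProduct, Complex.im_sum, Complex.mul_im]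

/-- PBH-style characterization of `2q`-sparse observability:
no eigenvector of `A` can be masked by attacks supported on two disjoint sets
of at most `q` sensors each, iff `(A, C)` remains observable after removing
any set of at most `2q` rows of `C`. -/
theorem stmt_15 (n m q : ℕ) (A : Matrix (Fin n) (Fin n) ℝ)
    (C : Matrix (Fin m) (Fin n) ℝ) :
    (∀ (K₁ K₂ : Finset (Fin m)), Disjoint K₁ K₂ → K₁.card ≤ q → K₂.card ≤ q →
      ∀ (lam : ℂ) (x : Fin n → ℂ) (d₁ d₂ : Fin m → ℂ),
        x ≠ 0 → (∀ i ∉ K₁, d₁ i = 0) → (∀ i ∉ K₂, d₂ i = 0) →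
        ¬((A.map (algebraMap ℝ ℂ)).mulVec x = lam • x ∧
          (C.map (algebraMap ℝ ℂ)).mulVec x + d₁ + d₂ = 0)) ↔
    (∀ S : Finset (Fin m), S.card ≤ 2 * q →
      ∀ x : Fin n → ℝ, (∀ (k : ℕ), ∀ i ∉ S, (C * A ^ k).mulVec x i = 0) →
        x = 0) := by
  set f := algebraMap ℝ ℂ
  set Ac := A.map f with hAc
  set Cc := C.map f with hCc
  have hmap : ∀ k : ℕ, (C * A ^ k).map f = Cc * Ac ^ k := by
    intro k
    have hp : (A ^ k).map f = Ac ^ k := map_pow f.mapMatrix A k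
    rw [Matrix.map_mul, hp]
  constructor
  · -- (i) → (ii)
    intro h S hS x hx
    by_contra hx0
    -- complex subspace V of vectors killed on Sᶜ by all C A^k
    set V : Submodule ℂ (Fin n → ℂ) :=
      { carrier := {v | ∀ (k : ℕ), ∀ i ∉ S, (Cc * Ac ^ k).mulVec v i = 0}
        add_mem' := by
          intro a b ha hb k i hi
          rw [Matrix.mulVec_add]
          simp [ha k i hi, hb k i hi]
        zero_mem' := by intro k i hi; simp
        smul_mem' := by
          intro c a ha k i hi
          rw [Matrix.mulVec_smul]
          simp [ha k i hi] } with hV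
    have hxV : (fun j => (x j : ℂ)) ∈ V := by
      intro k i hi
      have h2 := RingHom.map_mulVec f (C * A ^ k) x i
      rw [hx k i hi, map_zero, hmap] at h2
      simpa [Function.comp_def, f] using h2.symm
    have hxne : (fun j => (x j : ℂ)) ≠ 0 := by
      intro hc
      apply hx0
      funext j
      have := congrFun hc j
      simpa using this
    -- V is invariant under mulVec Ac
    have hinv : ∀ v ∈ V, Ac.mulVecLin v ∈ V := by
      intro v hv k i hi
      have h1 : Ac.mulVecLin v = Ac.mulVec v := rfl
      rw [h1]
      show ((Cc * Ac ^ k).mulVec (Ac.mulVec v)) i = 0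
      rw [Matrix.mulVec_mulVec, Matrix.mul_assoc, ← pow_succ]
      exact hv (k + 1) i hi
    set T : Module.End ℂ V := (Ac.mulVecLin).restrict hinv with hT
    have : Nontrivial V := by
      refine Submodule.nontrivial_iff_ne_bot.mpr ?_
      intro hb
      exact hxne (by simpa [hb] using hxV)
    obtain ⟨μ, hμ⟩ := Module.End.exists_eigenvalue T
    obtain ⟨v, hv⟩ := hμ.exists_hasEigenvector
    have hvne : (v : Fin n → ℂ) ≠ 0 := by
      simpa [Submodule.coe_eq_zero] using hv.right
    have heig : Ac.mulVec (v : Fin n → ℂ) = μ • (v : Fin n → ℂ) := by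
      have := hv.apply_eq_smul
      have h2 := congrArg (Subtype.val) this
      simpa [hT, LinearMap.restrict_apply] using h2
    -- split S into two sets of card ≤ q
    obtain ⟨K₁, hK₁S, hK₁card⟩ := Finset.exists_subset_card_eq (show min q S.card ≤ S.card from min_le_right _ _)
    set K₂ := S \ K₁ with hK₂
    have hdisj : Disjoint K₁ K₂ := Finset.disjoint_sdiff
    have hK₂card : K₂.card = S.card - K₁.card := Finset.card_sdiff_of_subset hK₁S
    have hq1 : K₁.card ≤ q := by omega
    have hq2 : K₂.card ≤ q := by omega
    have hunion : K₁ ∪ K₂ = S := Finset.union_sdiff_of_subset hK₁S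
    set d₁ : Fin m → ℂ := fun i => if i ∈ K₁ then -(Cc.mulVec (v : Fin n → ℂ) i) else 0
    set d₂ : Fin m → ℂ := fun i => if i ∈ K₂ then -(Cc.mulVec (v : Fin n → ℂ) i) else 0
    refine h K₁ K₂ hdisj hq1 hq2 μ (v : Fin n → ℂ) d₁ d₂ hvne ?_ ?_ ⟨heig, ?_⟩
    · intro i hi; simp [d₁, hi]
    · intro i hi; simp [d₂, hi]
    · funext i
      by_cases h1 : i ∈ K₁
      · have h2 : i ∉ K₂ := fun hc => (Finset.disjoint_left.mp hdisj h1) hc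
        simp [d₁, d₂, h1, h2]
      · by_cases h2 : i ∈ K₂
        · simp [d₁, d₂, h1, h2]
        · have hiS : i ∉ S := by
            rw [← hunion]; simp [h1, h2]
          have h0 := (v.2 : ∀ (k : ℕ), ∀ i ∉ S, (Cc * Ac ^ k).mulVec (v : Fin n → ℂ) i = 0) 0 i hiS
          rw [pow_zero, Matrix.mul_one] at h0
          simp [d₁, d₂, h1, h2, h0]
  · -- (ii) → (i)
    rintro h K₁ K₂ hdisj hq1 hq2 lam x d₁ d₂ hxne hd₁ hd₂ ⟨heig, hsum⟩
    set S := K₁ ∪ K₂ with hS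
    have hScard : S.card ≤ 2 * q := by
      calc S.card ≤ K₁.card + K₂.card := Finset.card_union_le _ _
        _ ≤ 2 * q := by omega
    -- Cc x vanishes off S
    have hCx : ∀ i ∉ S, Cc.mulVec x i = 0 := by
      intro i hi
      have hi1 : i ∉ K₁ := fun hc => hi (Finset.mem_union_left _ hc)
      have hi2 : i ∉ K₂ := fun hc => hi (Finset.mem_union_right _ hc)
      have := congrFun hsum i
      simpa [hd₁ i hi1, hd₂ i hi2] using this
    have hpow : ∀ k : ℕ, (Ac ^ k).mulVec x = lam ^ k • x := by
      intro k
      induction k with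
      | zero => simp
      | succ k ih =>
        rw [pow_succ, ← Matrix.mulVec_mulVec, heig, Matrix.mulVec_smul, ih,
          smul_smul, ← pow_succ']
    have hall : ∀ (k : ℕ), ∀ i ∉ S, (Cc * Ac ^ k).mulVec x i = 0 := by
      intro k i hi
      rw [← Matrix.mulVec_mulVec, hpow, Matrix.mulVec_smul]
      simp [hCx i hi]
    have hre : (fun j => (x j).re) = 0 := by
      refine h S hScard _ ?_
      intro k i hi
      rw [re_mulVec, hmap, hall k i hi, Complex.zero_re]
    have him : (fun j => (x j).im) = 0 := by
      refine h S hScard _ ?_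
      intro k i hi
      rw [im_mulVec, hmap, hall k i hi, Complex.zero_im]
    apply hxne
    funext j
    have h1 := congrFun hre j
    have h2 := congrFun him j
    simp only [Pi.zero_apply] at h1 h2
    exact Complex.ext h1 h2
end

section
/- Let A(1), A(2) ∈ ℂ^{n×n} have no common eigenvalue, and let c_1, c_2 ∈ ℂ^{1×n}, with both pairs (A(1), c_1) and (A(2), c_2) observable. Define 𝒪_j ∈ ℂ^{N×n} as the stacked observability matrix with rows c_j A(j)^k, k = 0, …, N−1, for N ≥ 2n. Then there is no nonzero vector v with 𝒪_1 v_1 = 𝒪_2 v_2 ≠ 0 for any v_1, v_2; i.e., Im(𝒪_1) ∩ Im(𝒪_2) = {0}. -/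
open Matrix Polynomial

noncomputable section
namespace Stmt19Aux

/-- The shift operator on sequences. -/
def shift : (ℕ → ℂ) →ₗ[ℂ] (ℕ → ℂ) where
  toFun s := fun k => s (k + 1)
  map_add' := by intros; rfl
  map_smul' := by intros; rfl

lemma shift_pow (i : ℕ) (s : ℕ → ℂ) (k : ℕ) : (shift ^ i) s k = s (k + i) := by
  induction i generalizing s k with
  | zero => rfl
  | succ m ih =>
    rw [pow_succ, Module.End.mul_apply]
    show (shift ^ m) (shift s) k = _
    rw [ih]
    show s (k + m + 1) = _
    ring_nf

lemma aeval_shift_apply (p : ℂ[X]) (s : ℕ → ℂ) (k : ℕ) :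
    (aeval shift p) s k = ∑ i ∈ Finset.range (p.natDegree + 1), p.coeff i * s (k + i) := by
  rw [aeval_eq_sum_range]
  simp only [LinearMap.coe_sum, Finset.sum_apply, LinearMap.smul_apply, Pi.smul_apply]
  refine Finset.sum_congr rfl fun i _ => ?_
  rw [shift_pow, smul_eq_mul]

lemma vanish (p : ℂ[X]) (hp : p.Monic) (s : ℕ → ℂ)
    (hann : (aeval shift p) s = 0) (h0 : ∀ k < p.natDegree, s k = 0) : s = 0 := by
  funext m
  show s m = 0
  induction m using Nat.strong_induction_on with
  | _ m ih =>
  by_cases hm : m < p.natDegree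
  · exact h0 m hm
  · push_neg at hm
    have hk := congrFun hann (m - p.natDegree)
    rw [aeval_shift_apply, Finset.sum_range_succ] at hk
    have hmd : m - p.natDegree + p.natDegree = m := Nat.sub_add_cancel hm
    rw [hmd, hp.coeff_natDegree, one_mul] at hk
    have hz : ∀ i ∈ Finset.range p.natDegree, p.coeff i * s (m - p.natDegree + i) = 0 := by
      intro i hi
      rw [Finset.mem_range] at hi
      have : m - p.natDegree + i < m := by omega
      rw [ih _ this, mul_zero]
    rw [Finset.sum_congr rfl hz, Finset.sum_const_zero, zero_add, Pi.zero_apply] at hk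
    exact hk

lemma aeval_shift_seq {n : ℕ} (A : Matrix (Fin n) (Fin n) ℂ) (c v : Fin n → ℂ) (p : ℂ[X]) :
    (aeval shift p) (fun k => c ⬝ᵥ (A ^ k).mulVec v)
      = fun k => c ⬝ᵥ ((A ^ k * aeval A p).mulVec v) := by
  induction p using Polynomial.induction_on' with
  | add p q hp hq =>
    rw [map_add, map_add, LinearMap.add_apply, hp, hq]
    funext k
    simp [Matrix.mul_add, Matrix.add_mulVec, dotProduct_add]
  | monomial i a =>
    rw [aeval_monomial, aeval_monomial]
    funext k
    rw [Algebra.algebraMap_eq_smul_one, Algebra.algebraMap_eq_smul_one]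
    rw [Module.End.mul_apply]
    simp only [LinearMap.smul_apply, Module.End.one_apply, Pi.smul_apply, shift_pow,
      smul_eq_mul, smul_mul_assoc, one_mul, Matrix.mul_smul, Matrix.smul_mulVec,
      dotProduct_smul, ← pow_add]

lemma root_mem_spectrum {m : ℕ} (M : Matrix (Fin m) (Fin m) ℂ) {z : ℂ}
    (hz : M.charpoly.IsRoot z) : z ∈ spectrum ℂ M := by
  rw [spectrum.mem_iff, Matrix.isUnit_iff_isUnit_det]
  have key : M.charpoly.eval z = (Matrix.scalar (Fin m) z - M).det := by
    rw [Matrix.charpoly, _root_.eval_det, Matrix.matPolyEquiv_charmatrix]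
    simp
  intro h
  rw [show algebraMap ℂ (Matrix (Fin m) (Fin m) ℂ) z = Matrix.scalar (Fin m) z from rfl] at h
  rw [← key, hz.eq_zero] at h
  simp at h

lemma coprime_of_disjoint {m : ℕ} (A₁ A₂ : Matrix (Fin m) (Fin m) ℂ)
    (hspec : spectrum ℂ A₁ ∩ spectrum ℂ A₂ = ∅) :
    IsCoprime A₁.charpoly A₂.charpoly := by
  by_contra h
  rw [← EuclideanDomain.gcd_isUnit_iff] at h
  have hd1 : EuclideanDomain.gcd A₁.charpoly A₂.charpoly ∣ A₁.charpoly :=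
    EuclideanDomain.gcd_dvd_left _ _
  have hd2 : EuclideanDomain.gcd A₁.charpoly A₂.charpoly ∣ A₂.charpoly :=
    EuclideanDomain.gcd_dvd_right _ _
  have hg0 : EuclideanDomain.gcd A₁.charpoly A₂.charpoly ≠ 0 := by
    intro h0
    rw [h0] at hd1
    exact (Matrix.charpoly_monic A₁).ne_zero (zero_dvd_iff.mp hd1)
  have hdeg : (EuclideanDomain.gcd A₁.charpoly A₂.charpoly).degree ≠ 0 := by
    intro h0
    exact h (Polynomial.isUnit_iff_degree_eq_zero.mpr h0)
  obtain ⟨z, hzr⟩ := Complex.isAlgClosed.exists_root _ hdeg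
  have hz1 : A₁.charpoly.IsRoot z := by
    obtain ⟨e, he⟩ := hd1
    rw [he]; simp [Polynomial.IsRoot.def, hzr.eq_zero]
  have hz2 : A₂.charpoly.IsRoot z := by
    obtain ⟨e, he⟩ := hd2
    rw [he]; simp [Polynomial.IsRoot.def, hzr.eq_zero]
  have : z ∈ spectrum ℂ A₁ ∩ spectrum ℂ A₂ :=
    ⟨root_mem_spectrum A₁ hz1, root_mem_spectrum A₂ hz2⟩
  rw [hspec] at this
  exact this

end Stmt19Aux
end

open Stmt19Aux Polynomial in
/-- If `(A₁,c₁)` and `(A₂,c₂)` are observable with disjoint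
spectra, the images of the stacked observability matrices of depth `N ≥ 2n`
intersect trivially. -/
theorem stmt_19 (n N : ℕ) (hN : 2 * n ≤ N)
    (A₁ A₂ : Matrix (Fin n) (Fin n) ℂ) (c₁ c₂ : Fin n → ℂ)
    (hspec : spectrum ℂ A₁ ∩ spectrum ℂ A₂ = ∅)
    (hobs₁ : ∀ x : Fin n → ℂ, (∀ k < n, c₁ ⬝ᵥ (A₁ ^ k).mulVec x = 0) → x = 0)
    (hobs₂ : ∀ x : Fin n → ℂ, (∀ k < n, c₂ ⬝ᵥ (A₂ ^ k).mulVec x = 0) → x = 0)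
    (O₁ O₂ : Matrix (Fin N) (Fin n) ℂ)
    (hO₁ : ∀ (k : Fin N) (i : Fin n), O₁ k i = Matrix.vecMul c₁ (A₁ ^ (k : ℕ)) i)
    (hO₂ : ∀ (k : Fin N) (i : Fin n), O₂ k i = Matrix.vecMul c₂ (A₂ ^ (k : ℕ)) i) :
    LinearMap.range O₁.mulVecLin ⊓ LinearMap.range O₂.mulVecLin = ⊥ := by
  rw [eq_bot_iff]
  rintro y ⟨⟨v₁, h1⟩, ⟨v₂, h2⟩⟩
  simp only [Matrix.mulVecLin_apply] at h1 h2
  set s₁ : ℕ → ℂ := fun k => c₁ ⬝ᵥ (A₁ ^ k).mulVec v₁ with hs₁def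
  set s₂ : ℕ → ℂ := fun k => c₂ ⬝ᵥ (A₂ ^ k).mulVec v₂ with hs₂def
  -- the two sequences agree on the first N terms
  have hagree : ∀ k < N, s₁ k = s₂ k := by
    intro k hk
    have e1 := congrFun h1 ⟨k, hk⟩
    have e2 := congrFun h2 ⟨k, hk⟩
    have f1 : O₁.mulVec v₁ ⟨k, hk⟩ = s₁ k := by
      show O₁ ⟨k, hk⟩ ⬝ᵥ v₁ = _
      have : O₁ ⟨k, hk⟩ = Matrix.vecMul c₁ (A₁ ^ k) := funext fun i => hO₁ ⟨k, hk⟩ i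
      rw [this, ← Matrix.dotProduct_mulVec]
    have f2 : O₂.mulVec v₂ ⟨k, hk⟩ = s₂ k := by
      show O₂ ⟨k, hk⟩ ⬝ᵥ v₂ = _
      have : O₂ ⟨k, hk⟩ = Matrix.vecMul c₂ (A₂ ^ k) := funext fun i => hO₂ ⟨k, hk⟩ i
      rw [this, ← Matrix.dotProduct_mulVec]
    rw [← f1, ← f2, e1, e2]
  -- annihilation by characteristic polynomials
  have hann₁ : (aeval shift A₁.charpoly) s₁ = 0 := by
    rw [hs₁def, aeval_shift_seq, Matrix.aeval_self_charpoly]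
    funext k; simp
  have hann₂ : (aeval shift A₂.charpoly) s₂ = 0 := by
    rw [hs₂def, aeval_shift_seq, Matrix.aeval_self_charpoly]
    funext k; simp
  have hdeg₁ : A₁.charpoly.natDegree = n := by
    rw [Matrix.charpoly_natDegree_eq_dim, Fintype.card_fin]
  have hdeg₂ : A₂.charpoly.natDegree = n := by
    rw [Matrix.charpoly_natDegree_eq_dim, Fintype.card_fin]
  -- the difference satisfies the product recurrence and vanishes initially
  have hprodmonic : (A₁.charpoly * A₂.charpoly).Monic :=
    (Matrix.charpoly_monic A₁).mul (Matrix.charpoly_monic A₂)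
  have hproddeg : (A₁.charpoly * A₂.charpoly).natDegree = 2 * n := by
    rw [Polynomial.natDegree_mul (Matrix.charpoly_monic A₁).ne_zero
      (Matrix.charpoly_monic A₂).ne_zero, hdeg₁, hdeg₂]
    ring
  have hd : s₁ - s₂ = 0 := by
    apply vanish _ hprodmonic
    · rw [map_sub]
      have e1 : (aeval shift (A₁.charpoly * A₂.charpoly)) s₁ = 0 := by
        rw [mul_comm, _root_.map_mul, Module.End.mul_apply, hann₁, map_zero]
      have e2 : (aeval shift (A₁.charpoly * A₂.charpoly)) s₂ = 0 := by
        rw [_root_.map_mul, Module.End.mul_apply, hann₂, map_zero]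
      rw [e1, e2, sub_zero]
    · intro k hk
      rw [hproddeg] at hk
      have := hagree k (lt_of_lt_of_le hk hN)
      simp [this]
  have hseq : s₁ = s₂ := sub_eq_zero.mp hd
  -- Bezout: s₁ is annihilated entirely
  obtain ⟨p, q, hpq⟩ := coprime_of_disjoint A₁ A₂ hspec
  have hs₁zero : s₁ = 0 := by
    have : (aeval shift (p * A₁.charpoly + q * A₂.charpoly)) s₁ = s₁ := by
      rw [hpq, _root_.map_one, Module.End.one_apply]
    have hann₂' : (aeval shift A₂.charpoly) s₁ = 0 := by rw [hseq]; exact hann₂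
    rw [map_add, LinearMap.add_apply, _root_.map_mul, _root_.map_mul, Module.End.mul_apply,
      Module.End.mul_apply, hann₁, hann₂', map_zero, map_zero, add_zero] at this
    exact this.symm
  have hv₁ : v₁ = 0 := hobs₁ v₁ fun k _ => congrFun hs₁zero k
  rw [← h1, hv₁, Matrix.mulVec_zero]
  exact Submodule.zero_mem ⊥
end
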